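/- For any two N×N Hermitian matrices X and Y with X positive semidefinite, and any nonnegative integers u and v, Tr(X^{u+v} Y^2) ≥ Tr(X^u Y X^v Y). -/

import Mathlib

open scoped ComplexOrder
open Matrix

lemma aux_real_key (N u v : ℕ) (a : Fin N → ℝ) (ha : ∀ i, 0 ≤ a i)
    (c : Fin N → Fin N → ℝ) (hc : ∀ i j, 0 ≤ c i j) (hsym : ∀ i j, c i j = c j i) :
    ∑ i, ∑ j, a i ^ u * a j ^ v * c i j ≤ ∑ i, ∑ j, a i ^ (u + v) * c i j := by
  have h2 : 0 ≤ ∑ i, ∑ j, (a i ^ (u + v) - a i ^ u * a j ^ v) * c i j := by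
    have hS : (∑ i, ∑ j, (a i ^ (u + v) - a i ^ u * a j ^ v) * c i j)
        = ∑ j, ∑ i, (a i ^ (u + v) - a i ^ u * a j ^ v) * c i j := Finset.sum_comm
    have key : (2 : ℝ) * (∑ i, ∑ j, (a i ^ (u + v) - a i ^ u * a j ^ v) * c i j)
        = ∑ i, ∑ j, ((a i ^ u - a j ^ u) * (a i ^ v - a j ^ v)) * c i j := by
      rw [two_mul]
      nth_rewrite 2 [hS]
      rw [← Finset.sum_add_distrib]
      refine Finset.sum_congr rfl fun i _ => ?_
      rw [← Finset.sum_add_distrib]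
      refine Finset.sum_congr rfl fun j _ => ?_
      rw [hsym j i, pow_add, pow_add]
      ring
    have hterm : ∀ i j : Fin N, 0 ≤ ((a i ^ u - a j ^ u) * (a i ^ v - a j ^ v)) * c i j := by
      intro i j
      refine mul_nonneg ?_ (hc i j)
      rcases le_total (a i) (a j) with h | h
      · nlinarith [mul_nonneg (sub_nonneg.2 (pow_le_pow_left₀ (ha i) h u))
          (sub_nonneg.2 (pow_le_pow_left₀ (ha i) h v))]
      · nlinarith [mul_nonneg (sub_nonneg.2 (pow_le_pow_left₀ (ha j) h u))
          (sub_nonneg.2 (pow_le_pow_left₀ (ha j) h v))]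
    nlinarith [key, Finset.sum_nonneg (fun i (_ : i ∈ Finset.univ) =>
      Finset.sum_nonneg (fun j (_ : j ∈ Finset.univ) => hterm i j))]
  have hexp : (∑ i, ∑ j, (a i ^ (u + v) - a i ^ u * a j ^ v) * c i j)
      = (∑ i, ∑ j, a i ^ (u + v) * c i j) - ∑ i, ∑ j, a i ^ u * a j ^ v * c i j := by
    simp_rw [sub_mul, Finset.sum_sub_distrib]
  rw [hexp] at h2
  linarith


lemma aux_conj_pow {n : Type*} [Fintype n] [DecidableEq n]
    (U D : Matrix n n ℂ) (hU : star U * U = 1) (hU' : U * star U = 1) (k : ℕ) :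
    (U * D * star U) ^ k = U * D ^ k * star U := by
  induction k with
  | zero => simp [hU']
  | succ k ih =>
    rw [pow_succ, ih, pow_succ]
    calc U * D ^ k * star U * (U * D * star U)
        = U * D ^ k * (star U * U) * D * star U := by noncomm_ring
      _ = U * (D ^ k * D) * star U := by rw [hU]; noncomm_ring

lemma aux_trace_conj {n : Type*} [Fintype n] [DecidableEq n]
    (U M : Matrix n n ℂ) (hU : star U * U = 1) :
    (U * M * star U).trace = M.trace := by
  rw [Matrix.trace_mul_cycle, hU, Matrix.one_mul]

/-- For any two N×N Hermitian matrices X and Y with X positive semidefinite, and any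
nonnegative integers u and v, Tr(X^{u+v} Y²) ≥ Tr(X^u Y X^v Y). -/
theorem stmt1 (N : ℕ) (X Y : Matrix (Fin N) (Fin N) ℂ)
    (hX : X.PosSemidef) (hY : Y.IsHermitian) (u v : ℕ) :
    (X ^ u * Y * X ^ v * Y).trace ≤ (X ^ (u + v) * Y ^ 2).trace := by
  have hXh := hX.1
  set U : Matrix (Fin N) (Fin N) ℂ := (hXh.eigenvectorUnitary : Matrix (Fin N) (Fin N) ℂ) with hUdef
  have hU : star U * U = 1 := Matrix.mem_unitaryGroup_iff'.mp hXh.eigenvectorUnitary.2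
  have hU' : U * star U = 1 := Matrix.mem_unitaryGroup_iff.mp hXh.eigenvectorUnitary.2
  set e := hXh.eigenvalues with hedef
  set D : Matrix (Fin N) (Fin N) ℂ := diagonal (fun i => (e i : ℂ)) with hDdef
  have hspec : X = U * D * star U := by
    exact hXh.spectral_theorem
  set B : Matrix (Fin N) (Fin N) ℂ := star U * Y * U with hBdef
  have hBherm : Bᴴ = B := by
    simp [hBdef, conjTranspose_mul, hY.eq, Matrix.mul_assoc, Matrix.star_eq_conjTranspose, conjTranspose_conjTranspose]
  have hXpow : ∀ k, X ^ k = U * D ^ k * star U := fun k => by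
    rw [hspec, aux_conj_pow U D hU hU' k]
  have h1 : X ^ u * Y * X ^ v * Y = U * (D ^ u * B * D ^ v * B) * star U := by
    rw [hXpow, hXpow, hBdef]
    calc U * D ^ u * star U * Y * (U * D ^ v * star U) * Y
        = U * (D ^ u * (star U * Y * U) * D ^ v * (star U * Y)) := by noncomm_ring
      _ = U * (D ^ u * (star U * Y * U) * D ^ v * (star U * Y)) * (U * star U) := by
          rw [hU', Matrix.mul_one]
      _ = U * (D ^ u * (star U * Y * U) * D ^ v * (star U * Y * U)) * star U := by noncomm_ring
  have h2 : X ^ (u + v) * Y ^ 2 = U * (D ^ (u + v) * B * B) * star U := by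
    rw [hXpow, hBdef, sq]
    calc U * D ^ (u + v) * star U * (Y * Y)
        = U * (D ^ (u + v) * (star U * Y * (U * star U) * Y)) := by rw [hU']; noncomm_ring
      _ = U * (D ^ (u + v) * (star U * Y * U) * (star U * Y)) := by noncomm_ring
      _ = U * (D ^ (u + v) * (star U * Y * U) * (star U * Y)) * (U * star U) := by
          rw [hU', Matrix.mul_one]
      _ = U * (D ^ (u + v) * (star U * Y * U) * (star U * Y * U)) * star U := by noncomm_ring
  rw [h1, h2]
  rw [aux_trace_conj U _ hU, aux_trace_conj U _ hU]
  -- now compare traces of D^u B D^v B and D^(u+v) B B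
  have hBconj : ∀ i j, B i j * B j i = (Complex.normSq (B i j) : ℂ) := by
    intro i j
    have : B j i = star (B i j) := by
      conv_lhs => rw [← hBherm]
      exact conjTranspose_apply B i j
    rw [this]
    exact Complex.mul_conj (B i j)
  have hDpow : ∀ k : ℕ, D ^ k = diagonal (fun i => ((e i : ℂ)) ^ k) := by
    intro k
    rw [hDdef, diagonal_pow]
    rfl
  have htr1 : (D ^ u * B * D ^ v * B).trace
      = ((∑ i, ∑ j, e i ^ u * e j ^ v * Complex.normSq (B i j) : ℝ) : ℂ) := by
    rw [Matrix.trace]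
    push_cast
    refine Finset.sum_congr rfl fun i _ => ?_
    rw [diag_apply, Matrix.mul_apply]
    refine Finset.sum_congr rfl fun j _ => ?_
    rw [hDpow, hDpow, Matrix.mul_diagonal, Matrix.diagonal_mul]
    rw [show (e i : ℂ) ^ u * B i j * (e j : ℂ) ^ v * B j i
        = (e i : ℂ) ^ u * (e j : ℂ) ^ v * (B i j * B j i) by ring, hBconj]
  have htr2 : (D ^ (u + v) * B * B).trace
      = ((∑ i, ∑ j, e i ^ (u + v) * Complex.normSq (B i j) : ℝ) : ℂ) := by
    rw [Matrix.trace]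
    push_cast
    refine Finset.sum_congr rfl fun i _ => ?_
    rw [diag_apply, Matrix.mul_apply]
    refine Finset.sum_congr rfl fun j _ => ?_
    rw [hDpow, Matrix.diagonal_mul]
    rw [show (e i : ℂ) ^ (u + v) * B i j * B j i
        = (e i : ℂ) ^ (u + v) * (B i j * B j i) by ring, hBconj]
  rw [htr1, htr2]
  rw [Complex.real_le_real]
  refine aux_real_key N u v e (fun i => hX.eigenvalues_nonneg i)
    (fun i j => Complex.normSq (B i j)) (fun i j => Complex.normSq_nonneg _) ?_
  intro i j
  show Complex.normSq (B i j) = Complex.normSq (B j i)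
  have hji : B j i = star (B i j) := by
    conv_lhs => rw [← hBherm]
    exact conjTranspose_apply B i j
  rw [hji]; simp
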